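/- Fix an integer l ≥ 0 and reals g, h. For x > 0, let ψp(x) = P_l^{(-g-l-3/2, -h+l-1/2)}(cosh 2x) and ψm(x) = P_l^{(-g-l-1/2, -h+l-3/2)}(cosh 2x). Then -8l(h+g-l+1)·ψp·ψm + 2(1+2h-2l)·tanh x·ψp·ψm' + 2(1+2g+2l)·coth x·ψm·ψp' - 2·ψm'·ψp' = 0 for all x > 0. -/

import Mathlib

open Finset
open Polynomial

/-- Generalized binomial coefficient `C(z, k) = z(z-1)⋯(z-k+1)/k!`. -/
noncomputable def genChoose (z : ℝ) (k : ℕ) : ℝ :=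
  (descPochhammer ℝ k).eval z / (Nat.factorial k)

/-- The Jacobi polynomial
`P_n^{(a,b)}(x) = ∑_{s=0}^n C(n+a, n-s) C(n+b, s) ((x-1)/2)^s ((x+1)/2)^{n-s}`. -/
noncomputable def jacobi (n : ℕ) (a b x : ℝ) : ℝ :=
  ∑ s ∈ range (n + 1),
    genChoose ((n : ℝ) + a) (n - s) * genChoose ((n : ℝ) + b) s *
      ((x - 1) / 2) ^ s * ((x + 1) / 2) ^ (n - s)

@[simp] lemma genChoose_zero (z : ℝ) : genChoose z 0 = 1 := by simp [genChoose]

lemma G1 (z : ℝ) (k : ℕ) :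
    ((k : ℝ) + 1) * genChoose z (k + 1) = (z - k) * genChoose z k := by
  unfold genChoose
  rw [descPochhammer_succ_eval, Nat.factorial_succ]
  push_cast
  field_simp

lemma desc_eval_succ_left (k : ℕ) (z : ℝ) :
    (descPochhammer ℝ (k+1)).eval z = z * (descPochhammer ℝ k).eval (z - 1) := by
  rw [descPochhammer_succ_left]; simp [eval_comp]

lemma G2 (z : ℝ) (k : ℕ) :
    genChoose (z + 1) (k + 1) = genChoose z (k + 1) + genChoose z k := by
  unfold genChoose
  rw [desc_eval_succ_left, descPochhammer_succ_eval, Nat.factorial_succ]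
  have : (z + 1 - 1) = z := by ring
  rw [this]; push_cast; field_simp; ring

lemma G3 (z : ℝ) (k : ℕ) :
    (z - k) * genChoose z k = z * genChoose (z - 1) k := by
  unfold genChoose
  have h1 : (descPochhammer ℝ (k+1)).eval z = (descPochhammer ℝ k).eval z * (z - k) :=
    descPochhammer_succ_eval k z
  have h2 : (descPochhammer ℝ (k+1)).eval z = z * (descPochhammer ℝ k).eval (z - 1) :=
    desc_eval_succ_left k z
  field_simp
  linear_combination h1.symm.trans h2

noncomputable def jacobiD (n : ℕ) (a b x : ℝ) : ℝ :=
  ∑ s ∈ range (n + 1),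
    ((genChoose ((n : ℝ) + a) (n - s) * genChoose ((n : ℝ) + b) s) *
        ((s : ℝ) * ((x - 1) / 2) ^ (s - 1) * (1 / 2)) * ((x + 1) / 2) ^ (n - s)
      + genChoose ((n : ℝ) + a) (n - s) * genChoose ((n : ℝ) + b) s *
          ((x - 1) / 2) ^ s * (((n - s : ℕ) : ℝ) * ((x + 1) / 2) ^ (n - s - 1) * (1 / 2)))

lemma L1 (l : ℕ) (a b y : ℝ) :
    (y + 1) * jacobiD l a b y
      = ((l : ℝ) + b) * jacobi l (a + 1) (b - 1) y - b * jacobi l a b y := by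
  unfold jacobi jacobiD
  rw [Finset.mul_sum, Finset.mul_sum, Finset.mul_sum, ← Finset.sum_sub_distrib]
  have hsplit : ∀ s ∈ range (l + 1),
      (y + 1) * ((genChoose ((l : ℝ) + a) (l - s) * genChoose ((l : ℝ) + b) s) *
        ((s : ℝ) * ((y - 1) / 2) ^ (s - 1) * (1 / 2)) * ((y + 1) / 2) ^ (l - s)
      + genChoose ((l : ℝ) + a) (l - s) * genChoose ((l : ℝ) + b) s *
          ((y - 1) / 2) ^ s * (((l - s : ℕ) : ℝ) * ((y + 1) / 2) ^ (l - s - 1) * (1 / 2)))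
      = (y + 1) * ((genChoose ((l : ℝ) + a) (l - s) * genChoose ((l : ℝ) + b) s) *
        ((s : ℝ) * ((y - 1) / 2) ^ (s - 1) * (1 / 2)) * ((y + 1) / 2) ^ (l - s))
      + (y + 1) * (genChoose ((l : ℝ) + a) (l - s) * genChoose ((l : ℝ) + b) s *
          ((y - 1) / 2) ^ s * (((l - s : ℕ) : ℝ) * ((y + 1) / 2) ^ (l - s - 1) * (1 / 2))) :=
    fun s _ => by ring
  rw [Finset.sum_congr rfl hsplit, Finset.sum_add_distrib]
  -- first sum
  have hS1 : ∑ s ∈ range (l + 1),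
      (y + 1) * ((genChoose ((l : ℝ) + a) (l - s) * genChoose ((l : ℝ) + b) s) *
        ((s : ℝ) * ((y - 1) / 2) ^ (s - 1) * (1 / 2)) * ((y + 1) / 2) ^ (l - s))
      = ∑ s ∈ range l, ((s : ℝ) + 1) *
          (genChoose ((l : ℝ) + a) (l - s - 1) * genChoose ((l : ℝ) + b) (s + 1)) *
          ((y - 1) / 2) ^ s * ((y + 1) / 2) ^ (l - s) := by
    rw [Finset.sum_range_succ']
    norm_num
    apply Finset.sum_congr rfl
    intro s hs
    have hsl : s < l := Finset.mem_range.mp hs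
    have h1 : l - (s + 1) = l - s - 1 := by omega
    have h2 : l - s = (l - s - 1) + 1 := by omega
    rw [h1, h2, pow_succ]
    push_cast
    ring
  rw [hS1]
  -- second sum
  have hS2 : ∑ s ∈ range (l + 1),
      (y + 1) * (genChoose ((l : ℝ) + a) (l - s) * genChoose ((l : ℝ) + b) s *
          ((y - 1) / 2) ^ s * (((l - s : ℕ) : ℝ) * ((y + 1) / 2) ^ (l - s - 1) * (1 / 2)))
      = ∑ s ∈ range (l + 1), ((l : ℝ) - s) *
          (genChoose ((l : ℝ) + a) (l - s) * genChoose ((l : ℝ) + b) s) *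
          ((y - 1) / 2) ^ s * ((y + 1) / 2) ^ (l - s) := by
    apply Finset.sum_congr rfl
    intro s hs
    have hsl : s < l + 1 := Finset.mem_range.mp hs
    rcases eq_or_lt_of_le (Nat.lt_succ_iff.mp hsl) with heq | hlt
    · subst heq
      simp
    · obtain ⟨k, hk⟩ : ∃ k, l - s = k + 1 := ⟨l - s - 1, by omega⟩
      have hls : (l : ℝ) - s = (k : ℝ) + 1 := by
        rw [← Nat.cast_sub hlt.le, hk]; push_cast; ring
      rw [hk, hls]
      simp only [Nat.add_sub_cancel]
      push_cast
      ring
  rw [hS2]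
  -- peel last terms
  rw [Finset.sum_range_succ (fun s => ((l : ℝ) - s) *
        (genChoose ((l : ℝ) + a) (l - s) * genChoose ((l : ℝ) + b) s) *
        ((y - 1) / 2) ^ s * ((y + 1) / 2) ^ (l - s)),
      Finset.sum_range_succ]
  have hl0 : ((l : ℝ) - (l : ℕ)) = 0 := by simp
  -- boundary
  have hbound : ((l : ℝ) + b) * (genChoose ((l : ℝ) + (a + 1)) (l - l) *
        genChoose ((l : ℝ) + (b - 1)) l * ((y - 1) / 2) ^ l * ((y + 1) / 2) ^ (l - l))
      - b * (genChoose ((l : ℝ) + a) (l - l) * genChoose ((l : ℝ) + b) l *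
        ((y - 1) / 2) ^ l * ((y + 1) / 2) ^ (l - l))
      = ((l : ℝ) - (l : ℕ)) * (genChoose ((l : ℝ) + a) (l - l) * genChoose ((l : ℝ) + b) l) *
        ((y - 1) / 2) ^ l * ((y + 1) / 2) ^ (l - l) := by
    rw [Nat.sub_self]
    simp only [genChoose_zero, pow_zero, hl0]
    have h3 := G3 ((l : ℝ) + b) l
    have e2 : (l : ℝ) + (b - 1) = ((l : ℝ) + b) - 1 := by ring
    rw [e2]
    linear_combination (-(((y - 1) / 2) ^ l)) * h3
  rw [← hbound, ← add_assoc, ← Finset.sum_add_distrib]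
  have hmain : ∀ s ∈ range l,
      ((s : ℝ) + 1) * (genChoose ((l : ℝ) + a) (l - s - 1) * genChoose ((l : ℝ) + b) (s + 1)) *
          ((y - 1) / 2) ^ s * ((y + 1) / 2) ^ (l - s)
      + ((l : ℝ) - s) * (genChoose ((l : ℝ) + a) (l - s) * genChoose ((l : ℝ) + b) s) *
          ((y - 1) / 2) ^ s * ((y + 1) / 2) ^ (l - s)
      = ((l : ℝ) + b) * (genChoose ((l : ℝ) + (a + 1)) (l - s) *
            genChoose ((l : ℝ) + (b - 1)) s * ((y - 1) / 2) ^ s * ((y + 1) / 2) ^ (l - s))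
        - b * (genChoose ((l : ℝ) + a) (l - s) * genChoose ((l : ℝ) + b) s *
            ((y - 1) / 2) ^ s * ((y + 1) / 2) ^ (l - s)) := by
    intro s hs
    have hsl : s < l := Finset.mem_range.mp hs
    have e1 : (l : ℝ) + (a + 1) = ((l : ℝ) + a) + 1 := by ring
    have e2 : (l : ℝ) + (b - 1) = ((l : ℝ) + b) - 1 := by ring
    rw [e1, e2]
    have h1 := G1 ((l : ℝ) + b) s
    have h2 := G2 ((l : ℝ) + a) (l - s - 1)
    rw [show l - s - 1 + 1 = l - s by omega] at h2
    have h3 := G3 ((l : ℝ) + b) s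
    have hcoef : ((s : ℝ) + 1) * (genChoose ((l : ℝ) + a) (l - s - 1) *
          genChoose ((l : ℝ) + b) (s + 1))
        + ((l : ℝ) - s) * (genChoose ((l : ℝ) + a) (l - s) * genChoose ((l : ℝ) + b) s)
        = ((l : ℝ) + b) * (genChoose (((l : ℝ) + a) + 1) (l - s) *
            genChoose (((l : ℝ) + b) - 1) s)
          - b * (genChoose ((l : ℝ) + a) (l - s) * genChoose ((l : ℝ) + b) s) := by
      linear_combination genChoose ((l : ℝ) + a) (l - s - 1) * h1
        - (((l : ℝ) + b) - s) * genChoose ((l : ℝ) + b) s * h2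
        + genChoose (((l : ℝ) + a) + 1) (l - s) * h3
    linear_combination (((y - 1) / 2) ^ s * ((y + 1) / 2) ^ (l - s)) * hcoef
  rw [Finset.sum_congr rfl hmain]

lemma L2 (l : ℕ) (a b y : ℝ) :
    (y - 1) * jacobiD l a b y
      = ((l : ℝ) + a) * jacobi l (a - 1) (b + 1) y - a * jacobi l a b y := by
  unfold jacobi jacobiD
  rw [Finset.mul_sum, Finset.mul_sum, Finset.mul_sum, ← Finset.sum_sub_distrib]
  have hsplit : ∀ s ∈ range (l + 1),
      (y - 1) * ((genChoose ((l : ℝ) + a) (l - s) * genChoose ((l : ℝ) + b) s) *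
        ((s : ℝ) * ((y - 1) / 2) ^ (s - 1) * (1 / 2)) * ((y + 1) / 2) ^ (l - s)
      + genChoose ((l : ℝ) + a) (l - s) * genChoose ((l : ℝ) + b) s *
          ((y - 1) / 2) ^ s * (((l - s : ℕ) : ℝ) * ((y + 1) / 2) ^ (l - s - 1) * (1 / 2)))
      = (y - 1) * ((genChoose ((l : ℝ) + a) (l - s) * genChoose ((l : ℝ) + b) s) *
        ((s : ℝ) * ((y - 1) / 2) ^ (s - 1) * (1 / 2)) * ((y + 1) / 2) ^ (l - s))
      + (y - 1) * (genChoose ((l : ℝ) + a) (l - s) * genChoose ((l : ℝ) + b) s *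
          ((y - 1) / 2) ^ s * (((l - s : ℕ) : ℝ) * ((y + 1) / 2) ^ (l - s - 1) * (1 / 2))) :=
    fun s _ => by ring
  rw [Finset.sum_congr rfl hsplit, Finset.sum_add_distrib]
  have hT1 : ∑ s ∈ range (l + 1),
      (y - 1) * ((genChoose ((l : ℝ) + a) (l - s) * genChoose ((l : ℝ) + b) s) *
        ((s : ℝ) * ((y - 1) / 2) ^ (s - 1) * (1 / 2)) * ((y + 1) / 2) ^ (l - s))
      = ∑ s ∈ range l, ((s : ℝ) + 1) *
          (genChoose ((l : ℝ) + a) (l - s - 1) * genChoose ((l : ℝ) + b) (s + 1)) *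
          ((y - 1) / 2) ^ (s + 1) * ((y + 1) / 2) ^ (l - s - 1) := by
    rw [Finset.sum_range_succ']
    norm_num
    apply Finset.sum_congr rfl
    intro s hs
    have hsl : s < l := Finset.mem_range.mp hs
    have h1 : l - (s + 1) = l - s - 1 := by omega
    rw [h1]
    push_cast
    ring
  rw [hT1]
  have hT2 : ∑ s ∈ range (l + 1),
      (y - 1) * (genChoose ((l : ℝ) + a) (l - s) * genChoose ((l : ℝ) + b) s *
          ((y - 1) / 2) ^ s * (((l - s : ℕ) : ℝ) * ((y + 1) / 2) ^ (l - s - 1) * (1 / 2)))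
      = ∑ s ∈ range l, ((l : ℝ) - s) *
          (genChoose ((l : ℝ) + a) (l - s) * genChoose ((l : ℝ) + b) s) *
          ((y - 1) / 2) ^ (s + 1) * ((y + 1) / 2) ^ (l - s - 1) := by
    rw [Finset.sum_range_succ]
    simp only [Nat.sub_self, Nat.cast_zero, zero_mul, mul_zero, zero_div, add_zero]
    norm_num
    apply Finset.sum_congr rfl
    intro s hs
    have hsl : s < l := Finset.mem_range.mp hs
    have hc : ((l - s : ℕ) : ℝ) = (l : ℝ) - s := by
      rw [Nat.cast_sub hsl.le]
    rw [hc]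
    ring
  rw [hT2]
  rw [Finset.sum_range_succ']
  have hG0 : ((l : ℝ) + a) * (genChoose ((l : ℝ) + (a - 1)) (l - 0) *
        genChoose ((l : ℝ) + (b + 1)) 0 * ((y - 1) / 2) ^ 0 * ((y + 1) / 2) ^ (l - 0))
      - a * (genChoose ((l : ℝ) + a) (l - 0) * genChoose ((l : ℝ) + b) 0 *
        ((y - 1) / 2) ^ 0 * ((y + 1) / 2) ^ (l - 0)) = 0 := by
    simp only [Nat.sub_zero, genChoose_zero, pow_zero]
    have h3 := G3 ((l : ℝ) + a) l
    have e : (l : ℝ) + (a - 1) = ((l : ℝ) + a) - 1 := by ring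
    rw [e]
    linear_combination (-(((y + 1) / 2) ^ l)) * h3
  rw [hG0, add_zero, ← Finset.sum_add_distrib]
  apply Finset.sum_congr rfl
  intro s hs
  have hsl : s < l := Finset.mem_range.mp hs
  have e1 : (l : ℝ) + (a - 1) = ((l : ℝ) + a) - 1 := by ring
  have e2 : (l : ℝ) + (b + 1) = ((l : ℝ) + b) + 1 := by ring
  have e3 : l - (s + 1) = l - s - 1 := by omega
  rw [e1, e2, e3]
  have hc : ((l - s - 1 : ℕ) : ℝ) = (l : ℝ) - s - 1 := by
    have : l - s - 1 = l - (s + 1) := by omega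
    rw [this, Nat.cast_sub hsl]
    push_cast; ring
  have h1 := G1 ((l : ℝ) + a) (l - s - 1)
  rw [show l - s - 1 + 1 = l - s by omega, hc] at h1
  have h2 := G2 ((l : ℝ) + b) s
  have h3 := G3 ((l : ℝ) + a) (l - s - 1)
  rw [hc] at h3
  have hcoef : ((s : ℝ) + 1) *
        (genChoose ((l : ℝ) + a) (l - s - 1) * genChoose ((l : ℝ) + b) (s + 1))
      + ((l : ℝ) - s) * (genChoose ((l : ℝ) + a) (l - s) * genChoose ((l : ℝ) + b) s)
      = ((l : ℝ) + a) * (genChoose (((l : ℝ) + a) - 1) (l - s - 1) *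
          genChoose (((l : ℝ) + b) + 1) (s + 1))
        - a * (genChoose ((l : ℝ) + a) (l - s - 1) * genChoose ((l : ℝ) + b) (s + 1)) := by
    linear_combination genChoose ((l : ℝ) + b) s * h1
      - ((s : ℝ) + 1 + a) * genChoose ((l : ℝ) + a) (l - s - 1) * h2
      + genChoose (((l : ℝ) + b) + 1) (s + 1) * h3
  linear_combination (((y - 1) / 2) ^ (s + 1) * ((y + 1) / 2) ^ (l - s - 1)) * hcoef

lemma hasDerivAt_jacobi (n : ℕ) (a b y : ℝ) :
    HasDerivAt (fun y => jacobi n a b y) (jacobiD n a b y) y := by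
  unfold jacobi jacobiD
  apply HasDerivAt.fun_sum
  intro s _
  have hu : HasDerivAt (fun y : ℝ => ((y - 1) / 2) ^ s)
      ((s : ℝ) * ((y - 1) / 2) ^ (s - 1) * (1 / 2)) y := by
    have := (((hasDerivAt_id y).sub_const 1).div_const 2).fun_pow s
    simpa using this
  have hv : HasDerivAt (fun y : ℝ => ((y + 1) / 2) ^ (n - s))
      (((n - s : ℕ) : ℝ) * ((y + 1) / 2) ^ (n - s - 1) * (1 / 2)) y := by
    have := (((hasDerivAt_id y).add_const 1).div_const 2).fun_pow (n - s)
    simpa using this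
  exact (hu.const_mul (genChoose ((n : ℝ) + a) (n - s) * genChoose ((n : ℝ) + b) s)).mul hv

/-- The new Jacobi polynomial relation (cc12HPT) for the extended
hyperbolic Darboux–Pöschl–Teller potential. -/
theorem jacobi_hypDPT_compatibility (l : ℕ) (g h : ℝ)
    (ψp ψm : ℝ → ℝ)
    (hψp : ∀ x, ψp x = jacobi l (-g - l - 3/2) (-h + l - 1/2) (Real.cosh (2 * x)))
    (hψm : ∀ x, ψm x = jacobi l (-g - l - 1/2) (-h + l - 3/2) (Real.cosh (2 * x))) :
    ∀ x : ℝ, 0 < x →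
      -8 * l * (h + g - l + 1) * ψp x * ψm x
        + 2 * (1 + 2 * h - 2 * l) * Real.tanh x * ψp x * deriv ψm x
        + 2 * (1 + 2 * g + 2 * l) * (Real.cosh x / Real.sinh x) * ψm x * deriv ψp x
        - 2 * deriv ψm x * deriv ψp x = 0 := by
  intro x hx
  set a1 : ℝ := -g - l - 3/2 with ha1
  set b1 : ℝ := -h + l - 1/2 with hb1
  set a2 : ℝ := -g - l - 1/2 with ha2
  set b2 : ℝ := -h + l - 3/2 with hb2
  have hψpf : ψp = fun x => jacobi l a1 b1 (Real.cosh (2 * x)) := funext hψp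
  have hψmf : ψm = fun x => jacobi l a2 b2 (Real.cosh (2 * x)) := funext hψm
  have hcosh : HasDerivAt (fun x : ℝ => Real.cosh (2 * x)) (Real.sinh (2 * x) * 2) x := by
    simpa using (HasDerivAt.cosh ((hasDerivAt_id x).const_mul 2))
  set y := Real.cosh (2 * x) with hy
  have hdp : deriv ψp x = jacobiD l a1 b1 y * (Real.sinh (2 * x) * 2) := by
    rw [hψpf]
    exact (((hasDerivAt_jacobi l a1 b1 y).comp x hcosh).deriv)
  have hdm : deriv ψm x = jacobiD l a2 b2 y * (Real.sinh (2 * x) * 2) := by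
    rw [hψmf]
    exact (((hasDerivAt_jacobi l a2 b2 y).comp x hcosh).deriv)
  have E1 := L1 l a1 b1 y
  have e1 : a1 + 1 = a2 := by rw [ha1, ha2]; ring
  have e2 : b1 - 1 = b2 := by rw [hb1, hb2]; ring
  rw [e1, e2] at E1
  have E2 := L2 l a2 b2 y
  have e3 : a2 - 1 = a1 := by rw [ha1, ha2]; ring
  have e4 : b2 + 1 = b1 := by rw [hb1, hb2]; ring
  rw [e3, e4] at E2
  -- trig facts
  have hS : Real.sinh x ≠ 0 := Real.sinh_ne_zero.mpr (ne_of_gt hx)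
  have hC : Real.cosh x ≠ 0 := ne_of_gt (Real.cosh_pos x)
  have hsq : Real.cosh x ^ 2 - Real.sinh x ^ 2 = 1 := Real.cosh_sq_sub_sinh_sq x
  have hyy : y = Real.cosh x ^ 2 + Real.sinh x ^ 2 := by
    rw [hy, two_mul, Real.cosh_add]; ring
  have hsinh2 : Real.sinh (2 * x) = 2 * Real.sinh x * Real.cosh x := by
    rw [two_mul, Real.sinh_add]; ring
  have htanh : Real.tanh x = Real.sinh x / Real.cosh x := Real.tanh_eq_sinh_div_cosh x
  have h1 : Real.tanh x * (Real.sinh (2 * x) * 2) = 2 * (y - 1) := by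
    rw [htanh, hsinh2, hyy]
    field_simp
    linear_combination (-1 : ℝ) * hsq
  have h2 : (Real.cosh x / Real.sinh x) * (Real.sinh (2 * x) * 2) = 2 * (y + 1) := by
    rw [hsinh2, hyy]
    field_simp
    linear_combination hsq
  have h3 : (Real.sinh (2 * x) * 2) * (Real.sinh (2 * x) * 2)
      = 4 * ((y - 1) * (y + 1)) := by
    rw [hsinh2, hyy]
    linear_combination (-4 * (Real.cosh x ^ 2 - Real.sinh x ^ 2 + 1)) * hsq
  rw [hψp x, hψm x, hdp, hdm, ← hy]
  linear_combination
      (2 * (1 + 2 * h - 2 * (l : ℝ)) * jacobi l a1 b1 y * jacobiD l a2 b2 y) * h1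
    + (2 * (1 + 2 * g + 2 * (l : ℝ)) * jacobi l a2 b2 y * jacobiD l a1 b1 y) * h2
    - (2 * jacobiD l a2 b2 y * jacobiD l a1 b1 y) * h3
    + (4 * (1 + 2 * g + 2 * (l : ℝ)) * jacobi l a2 b2 y
        - 8 * ((y - 1) * jacobiD l a2 b2 y)) * E1
    + (4 * (1 + 2 * h - 2 * (l : ℝ)) * jacobi l a1 b1 y
        - 8 * (((l : ℝ) + b1) * jacobi l a2 b2 y - b1 * jacobi l a1 b1 y)) * E2
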